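/- arXiv:1607.02824 — 3 statements merged into one kernel-verified Lean document; each statement's English description precedes it below -/
import Mathlib

section
/- For any angles x and y, cos²((x−y)/2) · ρ((x+y)/2) + sin²((x−y)/2) · ρ((x+y)/2 + π/2) = (1/2)·ρ(x) + (1/2)·ρ(y). That is, the expected post-measurement density matrix when a qubit in state x (or y) is projectively measured in the basis at the average angle (x+y)/2 equals the arithmetic mean of ρ(x) and ρ(y). -/
open Real Matrix

noncomputable def qubitDensity (θ : ℝ) : Matrix (Fin 2) (Fin 2) ℝ :=
  !![Real.cos θ ^ 2, Real.cos θ * Real.sin θ;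
     Real.cos θ * Real.sin θ, Real.sin θ ^ 2]

theorem expected_post_measurement_density (x y : ℝ) :
    Real.cos ((x - y) / 2) ^ 2 • qubitDensity ((x + y) / 2) +
      Real.sin ((x - y) / 2) ^ 2 • qubitDensity ((x + y) / 2 + Real.pi / 2) =
    (1 / 2 : ℝ) • qubitDensity x + (1 / 2 : ℝ) • qubitDensity y := by
  have hx : x = (x + y) / 2 + (x - y) / 2 := by ring
  have hy : y = (x + y) / 2 - (x - y) / 2 := by ring
  set a := (x + y) / 2
  set b := (x - y) / 2
  have h1 : Real.cos a ^ 2 + Real.sin a ^ 2 = 1 := Real.cos_sq_add_sin_sq a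
  have h2 : Real.cos b ^ 2 + Real.sin b ^ 2 = 1 := Real.cos_sq_add_sin_sq b
  ext i j
  fin_cases i <;> fin_cases j <;>
    simp [qubitDensity, hx, hy, Real.cos_add, Real.sin_add, Real.cos_sub,
      Real.sin_sub, Real.cos_pi_div_two, Real.sin_pi_div_two] <;> nlinarith [h1, h2]
end

section
/- Let x, y be angles, let s = (x+y)/2 and let p = cos²((x−y)/2), q = sin²((x−y)/2). If two independent random matrices A, B each equal ρ(s) with probability p and ρ(s + π/2) with probability q, then E[Tr(A·B)] = 1/2 + (1/2)·Tr(ρ(x)·ρ(y)). In closed form: p²·Tr(ρ(s)ρ(s)) + 2pq·Tr(ρ(s)ρ(s+π/2)) + q²·Tr(ρ(s+π/2)ρ(s+π/2)) = 1/2 + (1/2)·cos²(x−y). -/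
open Real Matrix

theorem expected_fidelity_after_pairwise_measurement (x y : ℝ) :
    let s := (x + y) / 2
    let p := Real.cos ((x - y) / 2) ^ 2
    let q := Real.sin ((x - y) / 2) ^ 2
    p ^ 2 * (qubitDensity s * qubitDensity s).trace +
      2 * p * q * (qubitDensity s * qubitDensity (s + Real.pi / 2)).trace +
      q ^ 2 * (qubitDensity (s + Real.pi / 2) * qubitDensity (s + Real.pi / 2)).trace =
    1 / 2 + 1 / 2 * Real.cos (x - y) ^ 2 := by
  intro s p q
  have hxy : x - y = 2 * ((x - y) / 2) := by ring
  rw [hxy, Real.cos_two_mul]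
  simp only [qubitDensity, Matrix.mul_fin_two, Matrix.trace_fin_two,
    Matrix.cons_val', Matrix.cons_val_zero, Matrix.cons_val_one, Matrix.head_cons,
    Matrix.empty_val', Matrix.cons_val_fin_one, Matrix.of_apply, Matrix.vecHead, Matrix.vecTail,
    Real.cos_add, Real.sin_add, Real.cos_pi_div_two, Real.sin_pi_div_two]
  have h1 := Real.sin_sq_add_cos_sq s
  have h2 := Real.sin_sq_add_cos_sq ((x - y) / 2)
  simp only [p, q]
  linear_combination ((Real.cos s ^ 2 + Real.sin s ^ 2 + 1) *
      (Real.cos ((x - y) / 2) ^ 4 + Real.sin ((x - y) / 2) ^ 4)) * h1 +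
    (Real.sin ((x - y) / 2) ^ 2 + 1 - Real.cos ((x - y) / 2) ^ 2) * h2
end

section
/- Let A be a symmetric real N×N stochastic matrix (nonnegative entries, rows summing to 1) whose associated graph is connected and which has positive diagonal entries. Then for any ρ : Fin N → Matrix (Fin 2) (Fin 2) ℝ, the iterates ρ(t+1)ᵢ = Σⱼ Aᵢⱼ ρ(t)ⱼ converge as t → ∞ to the constant vector whose entries are all (1/N)·Σⱼ ρ(0)ⱼ. -/
open Matrix Filter Finset

lemma fixed_vector_const {N : ℕ} (hN : 0 < N)
    (A : Matrix (Fin N) (Fin N) ℝ)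
    (hsymm : A.IsSymm)
    (hnonneg : ∀ i j, 0 ≤ A i j)
    (hrow : ∀ i, ∑ j, A i j = 1)
    (hconn : (SimpleGraph.fromRel (fun i j => A i j ≠ 0)).Connected)
    (x : Fin N → ℝ) (hx : A *ᵥ x = x) : ∀ i j, x i = x j := by
  haveI : Nonempty (Fin N) := ⟨⟨0, hN⟩⟩
  obtain ⟨i₀, hi₀⟩ := Finite.exists_max x
  -- step: if x i = x i₀ and A i j ≠ 0 then x j = x i₀
  have step : ∀ i j, x i = x i₀ → A i j ≠ 0 → x j = x i₀ := by
    intro i j hxi hAij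
    have h1 : ∑ k, A i k * (x i₀ - x k) = 0 := by
      have h2 : ∑ k, A i k * x k = x i := congrFun hx i
      have h3 : ∑ k, A i k * x i₀ = x i₀ := by
        rw [← Finset.sum_mul, hrow, one_mul]
      simp [mul_sub, Finset.sum_sub_distrib, h2, h3, hxi]
    have h4 := (Finset.sum_eq_zero_iff_of_nonneg (fun k _ =>
      mul_nonneg (hnonneg i k) (by linarith [hi₀ k]))).mp h1 j (Finset.mem_univ j)
    rcases mul_eq_zero.mp h4 with h | h
    · exact absurd h hAij
    · linarith
  intro i j
  suffices h : ∀ k, x k = x i₀ by rw [h i, h j]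
  intro k
  obtain ⟨w⟩ := (hconn i₀ k)
  have key : ∀ a c (w : SimpleGraph.Walk (SimpleGraph.fromRel (fun i j => A i j ≠ 0)) a c),
      x a = x i₀ → x c = x i₀ := by
    intro a c w
    induction w with
    | nil => exact id
    | @cons a b c h p ih =>
      intro ha
      apply ih
      have hadj := (SimpleGraph.fromRel_adj _ a b).mp h
      rcases hadj.2 with h' | h'
      · exact step a b ha h'
      · refine step a b ha ?_
        rwa [show A a b = A b a from (congrFun (congrFun hsymm.symm b) a).symm ▸ rfl]
  exact key i₀ k w rfl

lemma eig_bound {N : ℕ} (A : Matrix (Fin N) (Fin N) ℝ)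
    (hnonneg : ∀ i j, 0 ≤ A i j)
    (hrow : ∀ i, ∑ j, A i j = 1)
    (hdiag : ∀ i, 0 < A i i)
    (μ : ℝ) (x : Fin N → ℝ) (hx : x ≠ 0) (h : A *ᵥ x = μ • x) :
    -1 < μ ∧ μ ≤ 1 := by
  haveI : Nonempty (Fin N) := by
    rcases Nat.eq_zero_or_pos N with h0 | h0
    · subst h0; exact absurd (funext fun i => absurd i.2 (by omega)) hx
    · exact ⟨⟨0, h0⟩⟩
  obtain ⟨i₀, hi₀⟩ := Finite.exists_max (fun i => |x i|)
  have hxi₀ : 0 < |x i₀| := by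
    rcases (abs_nonneg (x i₀)).lt_or_eq with h' | h'
    · exact h'
    · exfalso; apply hx; funext i
      have h5 := hi₀ i
      rw [← h'] at h5
      have h6 := abs_nonneg (x i)
      have h7 : |x i| = 0 := le_antisymm h5 h6
      simpa using h7
  have hdle : ∀ i, A i i ≤ 1 := by
    intro i
    rw [← hrow i]
    exact Finset.single_le_sum (fun j _ => hnonneg i j) (Finset.mem_univ i)
  have key : ∀ i, |μ * x i - A i i * x i| ≤ (1 - A i i) * |x i₀| := by
    intro i
    have hmv : ∑ j, A i j * x j = μ * x i := congrFun h i
    have : μ * x i - A i i * x i = ∑ j ∈ univ.erase i, A i j * x j := by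
      rw [← hmv, Finset.sum_erase_eq_sub (Finset.mem_univ i)]
    rw [this]
    calc |∑ j ∈ univ.erase i, A i j * x j| ≤ ∑ j ∈ univ.erase i, |A i j * x j| :=
          Finset.abs_sum_le_sum_abs _ _
      _ ≤ ∑ j ∈ univ.erase i, A i j * |x i₀| := by
          refine Finset.sum_le_sum fun j _ => ?_
          rw [abs_mul, abs_of_nonneg (hnonneg i j)]
          exact mul_le_mul_of_nonneg_left (hi₀ j) (hnonneg i j)
      _ = (1 - A i i) * |x i₀| := by
          rw [← Finset.sum_mul, Finset.sum_erase_eq_sub (Finset.mem_univ i), hrow]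
  constructor
  · by_contra hle
    push_neg at hle
    have k := key i₀
    have h1 : |μ * x i₀ - A i₀ i₀ * x i₀| = |μ - A i₀ i₀| * |x i₀| := by
      rw [← abs_mul]; ring_nf
    have h2 : |μ - A i₀ i₀| ≥ 1 + A i₀ i₀ := by
      rw [abs_sub_comm, abs_of_nonneg (by nlinarith [hdiag i₀])]
      linarith
    rw [h1] at k
    nlinarith [hdiag i₀]
  · by_contra hle
    push_neg at hle
    have k := key i₀
    have h1 : |μ * x i₀ - A i₀ i₀ * x i₀| = |μ - A i₀ i₀| * |x i₀| := by
      rw [← abs_mul]; ring_nf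
    have h2 : |μ - A i₀ i₀| = μ - A i₀ i₀ := by
      rw [abs_of_nonneg (by linarith [hdle i₀])]
    rw [h1, h2] at k
    nlinarith [hdiag i₀]

lemma pow_entry_tendsto {N : ℕ} (hN : 0 < N)
    (A : Matrix (Fin N) (Fin N) ℝ) (hsymm : A.IsSymm)
    (hnonneg : ∀ i j, 0 ≤ A i j) (hrow : ∀ i, ∑ j, A i j = 1)
    (hdiag : ∀ i, 0 < A i i)
    (hconn : (SimpleGraph.fromRel (fun i j => A i j ≠ 0)).Connected) :
    ∀ i j, Tendsto (fun t => (A ^ t) i j) atTop (nhds ((N : ℝ)⁻¹)) := by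
  have hA : A.IsHermitian := by
    rw [Matrix.IsHermitian, conjTranspose_eq_transpose_of_trivial]; exact hsymm
  set μ : Fin N → ℝ := hA.eigenvalues with hμ
  set U : Matrix (Fin N) (Fin N) ℝ := (Matrix.IsHermitian.eigenvectorUnitary hA : Matrix (Fin N) (Fin N) ℝ) with hU
  have hUU : U * star U = 1 := (Matrix.mem_unitaryGroup_iff).mp (Matrix.IsHermitian.eigenvectorUnitary hA).2
  have hUU' : star U * U = 1 := (Matrix.mem_unitaryGroup_iff').mp (Matrix.IsHermitian.eigenvectorUnitary hA).2
  have hspec : A = U * diagonal μ * star U := by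
    have := hA.spectral_theorem
    simpa using this
  have hbound : ∀ k, -1 < μ k ∧ μ k ≤ 1 := by
    intro k
    refine eig_bound A hnonneg hrow hdiag (μ k) (hA.eigenvectorBasis k) ?_ ?_
    · exact fun h => hA.eigenvectorBasis.orthonormal.ne_zero k (by simpa using congrArg (WithLp.toLp 2) h)
    · exact hA.mulVec_eigenvectorBasis k
  -- powers
  have hpow : ∀ t, A ^ t = U * diagonal (fun k => μ k ^ t) * star U := by
    intro t
    induction t with
    | zero =>
      rw [pow_zero]
      have h1 : (diagonal (fun k => μ k ^ 0) : Matrix (Fin N) (Fin N) ℝ) = 1 := by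
        simp
      rw [h1, mul_one, hUU]
    | succ t ih =>
      have cancel : ∀ X Y : Matrix (Fin N) (Fin N) ℝ, X * star U * (U * Y) = X * Y := by
        intro X Y
        rw [mul_assoc, ← mul_assoc (star U), hUU', one_mul]
      rw [pow_succ, ih, hspec,
        show (U * diagonal μ * star U) = U * (diagonal μ * star U) from by rw [mul_assoc],
        cancel]
      have h2 : (fun k => μ k ^ t * μ k) = fun k => μ k ^ (t + 1) :=
        funext fun k => (pow_succ _ _).symm
      rw [show (U * diagonal fun k => μ k ^ t) * (diagonal μ * star U)
          = U * ((diagonal fun k => μ k ^ t) * diagonal μ) * star U from by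
        simp only [mul_assoc], diagonal_mul_diagonal, h2]
  -- entry formula
  have hentry : ∀ (d : Fin N → ℝ) i j,
      (U * diagonal d * star U) i j = ∑ k, U i k * d k * U j k := by
    intro d i j
    rw [Matrix.mul_apply]
    congr 1
    funext k
    rw [Matrix.mul_diagonal]
    simp [star_apply, mul_comm]
  have cancel : ∀ X Y : Matrix (Fin N) (Fin N) ℝ, X * star U * (U * Y) = X * Y := by
    intro X Y
    rw [mul_assoc, ← mul_assoc (star U), hUU', one_mul]
  set p : Fin N → ℝ := fun k => if μ k = 1 then 1 else 0 with hp
  set L : Matrix (Fin N) (Fin N) ℝ := U * diagonal p * star U with hL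
  have hLentry : ∀ i j, L i j = ∑ k, U i k * p k * U j k := fun i j => hentry p i j
  have htend : ∀ i j, Tendsto (fun t => (A ^ t) i j) atTop (nhds (L i j)) := by
    intro i j
    have he : ∀ t, (A ^ t) i j = ∑ k, U i k * μ k ^ t * U j k := by
      intro t; rw [hpow t, hentry]
    simp only [he, hLentry]
    apply tendsto_finset_sum
    intro k _
    by_cases hk : μ k = 1
    · simpa [hp, hk] using (tendsto_const_nhds :
        Tendsto (fun _ : ℕ => U i k * 1 * U j k) atTop _)
    · have habs : |μ k| < 1 := abs_lt.mpr ⟨(hbound k).1, lt_of_le_of_ne (hbound k).2 hk⟩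
      have h0 : Tendsto (fun t : ℕ => μ k ^ t) atTop (nhds 0) :=
        tendsto_pow_atTop_nhds_zero_of_abs_lt_one habs
      have h1 := (h0.const_mul (U i k)).mul_const (U j k)
      simpa [hp, hk, mul_assoc] using h1
  have hAL : A * L = L := by
    rw [hspec, hL]
    rw [show U * diagonal p * star U = U * (diagonal p * star U) from by rw [mul_assoc],
      cancel]
    rw [show (U * diagonal μ) * (diagonal p * star U)
        = U * (diagonal μ * diagonal p) * star U from by simp only [mul_assoc],
      diagonal_mul_diagonal]
    have hμp : (fun k => μ k * p k) = p := by
      funext k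
      by_cases hk : μ k = 1 <;> simp [hp, hk]
    rw [hμp, mul_assoc]
  have hcol : ∀ j, A *ᵥ (fun i => L i j) = fun i => L i j := by
    intro j
    funext i
    have h3 := congrFun (congrFun hAL i) j
    rw [← h3]
    simp [Matrix.mul_apply, mulVec, dotProduct]
  have hconst : ∀ j i i', L i j = L i' j := fun j i i' =>
    fixed_vector_const hN A hsymm hnonneg hrow hconn _ (hcol j) i i'
  have hsymL : ∀ i j, L i j = L j i := by
    intro i j
    rw [hLentry, hLentry]
    exact Finset.sum_congr rfl (fun k _ => by ring)
  have hrowpow : ∀ t i, ∑ j, (A ^ t) i j = 1 := by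
    intro t
    induction t with
    | zero => intro i; simp [Matrix.one_apply]
    | succ t ih =>
      intro i
      rw [pow_succ]
      simp only [Matrix.mul_apply]
      rw [Finset.sum_comm]
      calc ∑ k, ∑ j, (A ^ t) i k * A k j = ∑ k, (A ^ t) i k * ∑ j, A k j := by
            simp [Finset.mul_sum]
        _ = ∑ k, (A ^ t) i k := by simp [hrow]
        _ = 1 := ih i
  have hrowL : ∀ i, ∑ j, L i j = 1 := by
    intro i
    have h1 : Tendsto (fun t => ∑ j, (A ^ t) i j) atTop (nhds (∑ j, L i j)) :=
      tendsto_finset_sum _ (fun j _ => htend i j)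
    have h2 : Tendsto (fun t => ∑ j, (A ^ t) i j) atTop (nhds 1) := by
      simp only [hrowpow]
      exact tendsto_const_nhds
    exact tendsto_nhds_unique h1 h2
  have hval : ∀ i j, L i j = (N : ℝ)⁻¹ := by
    intro i j
    have hrc : ∀ j', L i j' = L i i := fun j' => by
      rw [hsymL i j', hconst i j' i]
    have hsum : ∑ j', L i j' = (N : ℝ) * L i i := by
      rw [Finset.sum_congr rfl (fun j' _ => hrc j')]
      simp [Finset.card_univ, mul_comm]
    have hNL : (N : ℝ) * L i i = 1 := by rw [← hsum, hrowL]
    have hNne : (N : ℝ) ≠ 0 := Nat.cast_ne_zero.mpr hN.ne'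
    rw [hrc j]
    field_simp at hNL ⊢
    linarith
  intro i j
  exact hval i j ▸ htend i j

theorem stochastic_matrix_iterates_average {N : ℕ} (hN : 0 < N)
    (A : Matrix (Fin N) (Fin N) ℝ)
    (hsymm : A.IsSymm)
    (hnonneg : ∀ i j, 0 ≤ A i j)
    (hrow : ∀ i, ∑ j, A i j = 1)
    (hdiag : ∀ i, 0 < A i i)
    (hconn : (SimpleGraph.fromRel (fun i j => A i j ≠ 0)).Connected)
    (ρ : ℕ → Fin N → Matrix (Fin 2) (Fin 2) ℝ)
    (hrec : ∀ t i, ρ (t + 1) i = ∑ j, A i j • ρ t j) :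
    ∀ i, Tendsto (fun t => ρ t i) atTop (nhds ((N : ℝ)⁻¹ • ∑ j, ρ 0 j)) := by
  have hiter : ∀ t i, ρ t i = ∑ j, (A ^ t) i j • ρ 0 j := by
    intro t
    induction t with
    | zero =>
      intro i
      simp [Matrix.one_apply, ite_smul]
    | succ t ih =>
      intro i
      rw [hrec t i]
      have h1 : ∀ j, ρ t j = ∑ k, (A ^ t) j k • ρ 0 k := ih
      calc ∑ j, A i j • ρ t j
          = ∑ j, ∑ k, (A i j * (A ^ t) j k) • ρ 0 k := by
            refine Finset.sum_congr rfl fun j _ => ?_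
            rw [h1 j, Finset.smul_sum]
            exact Finset.sum_congr rfl fun k _ => (smul_smul _ _ _)
        _ = ∑ k, (∑ j, A i j * (A ^ t) j k) • ρ 0 k := by
            rw [Finset.sum_comm]
            exact Finset.sum_congr rfl fun k _ => (Finset.sum_smul).symm
        _ = ∑ k, (A ^ (t + 1)) i k • ρ 0 k := by
            refine Finset.sum_congr rfl fun k _ => ?_
            rw [pow_succ', Matrix.mul_apply]
  intro i
  have htend := pow_entry_tendsto hN A hsymm hnonneg hrow hdiag hconn
  have h2 : Tendsto (fun t => ∑ j, (A ^ t) i j • ρ 0 j) atTop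
      (nhds (∑ j, (N : ℝ)⁻¹ • ρ 0 j)) :=
    tendsto_finset_sum _ fun j _ => (htend i j).smul_const (ρ 0 j)
  have h3 : (∑ j, (N : ℝ)⁻¹ • ρ 0 j) = (N : ℝ)⁻¹ • ∑ j, ρ 0 j :=
    (Finset.smul_sum).symm
  rw [← h3]
  simpa only [← hiter] using h2
end
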